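/- arXiv:1611.06910 — 3 statements merged into one kernel-verified Lean document; each statement's English description precedes it below -/
import Mathlib

section
/- Let v : T × 2^[m] → ℝ≥0 be monotone, subadditive, with no externalities, and v(t,{j}) = V(t_j). Fix Q_j ≥ 0 and τ ≥ 0, let Y(t) = {j : V(t_j) < Q_j + τ}, v̂(t,S) = v(t, S∩Y(t)), and μ(t,S) = max_{S'⊆S}(v̂(t,S') − Σ_{j∈S'} Q_j). If X* is a subset of X maximizing v̂(t,·) − Σ Q_j over subsets of X (choosing a maximizer of minimal size), then for every k ∈ X*: Q_k ≤ V(t_k) < Q_k + τ. -/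
/-- Any minimal-size maximizer `X*` of `S' ↦ v̂(t,S') − Σ_{j∈S'} Q_j` over subsets of `X`
contains only items with `Q_k ≤ V(t_k) < Q_k + τ`. -/
theorem minimal_maximizer_values {T C : Type*} {m : ℕ}
    (coord : T → Fin m → C)
    (v : T → Finset (Fin m) → ℝ) (V : T → Fin m → ℝ)
    (hv0 : ∀ t S, 0 ≤ v t S)
    (hmono : ∀ t (U W : Finset (Fin m)), U ⊆ W → v t U ≤ v t W)
    (hsub : ∀ t (U W : Finset (Fin m)), v t (U ∪ W) ≤ v t U + v t W)
    (hext : ∀ t t' (S : Finset (Fin m)),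
      (∀ j ∈ S, coord t j = coord t' j) → v t S = v t' S)
    (hsing : ∀ t j, v t {j} = V t j)
    (Q : Fin m → ℝ) (τ : ℝ) (hQ : ∀ j, 0 ≤ Q j) (hτ : 0 ≤ τ)
    (t : T) (X Xstar : Finset (Fin m)) (hXX : Xstar ⊆ X)
    -- `Xstar` maximizes `S' ↦ v(t, S' ∩ Y(t)) − Σ_{j∈S'} Q_j` over subsets of `X`
    (hmax : ∀ S' ⊆ X,
      v t (S' ∩ Finset.univ.filter (fun j => V t j < Q j + τ)) - ∑ j ∈ S', Q j ≤
        v t (Xstar ∩ Finset.univ.filter (fun j => V t j < Q j + τ)) - ∑ j ∈ Xstar, Q j)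
    -- minimal size: removing any element strictly decreases the objective
    (hmin : ∀ k ∈ Xstar,
      v t ((Xstar.erase k) ∩ Finset.univ.filter (fun j => V t j < Q j + τ)) -
          ∑ j ∈ Xstar.erase k, Q j <
        v t (Xstar ∩ Finset.univ.filter (fun j => V t j < Q j + τ)) - ∑ j ∈ Xstar, Q j) :
    ∀ k ∈ Xstar, Q k ≤ V t k ∧ V t k < Q k + τ := by
  intro k hk
  set Y := Finset.univ.filter (fun j => V t j < Q j + τ) with hY
  have hsum : ∑ j ∈ Xstar.erase k, Q j = (∑ j ∈ Xstar, Q j) - Q k := by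
    rw [Finset.sum_erase_eq_sub hk]
  have hmink := hmin k hk
  rw [hsum] at hmink
  constructor
  · -- lower bound
    have hsubset : Xstar ∩ Y ⊆ (Xstar.erase k ∩ Y) ∪ {k} := by
      intro j hj
      simp only [Finset.mem_inter, Finset.mem_union, Finset.mem_erase,
        Finset.mem_singleton] at hj ⊢
      by_cases h : j = k
      · exact Or.inr h
      · exact Or.inl ⟨⟨h, hj.1⟩, hj.2⟩
    have h1 := hmono t _ _ hsubset
    have h2 := hsub t (Xstar.erase k ∩ Y) {k}
    rw [hsing] at h2
    linarith
  · -- upper bound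
    by_contra h
    have hkY : k ∉ Y := by simp [hY, h]
    have heq : Xstar.erase k ∩ Y = Xstar ∩ Y := by
      ext j
      simp only [Finset.mem_inter, Finset.mem_erase]
      constructor
      · rintro ⟨⟨_, h1⟩, h2⟩; exact ⟨h1, h2⟩
      · rintro ⟨h1, h2⟩
        refine ⟨⟨?_, h1⟩, h2⟩
        rintro rfl; exact hkY h2
    rw [heq] at hmink
    have := hQ k
    linarith
end

section
/- Under the setup of the previous lemma, the function μ is τ-Lipschitz in the following sense: for all types t, t' and sets X, Y ⊆ [m], letting H = {j ∈ X ∩ Y : t_j = t'_j}, we have |μ(t,X) − μ(t',Y)| ≤ τ · (|X Δ Y| + |X ∩ Y| − |H|). -/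
noncomputable def surplusFn {T : Type*} {m : ℕ}
    (vhat : T → Finset (Fin m) → ℝ) (Q : Fin m → ℝ) (t : T) (S : Finset (Fin m)) : ℝ :=
  S.powerset.sup' ⟨∅, Finset.empty_mem_powerset S⟩
    (fun S' => vhat t S' - ∑ j ∈ S', Q j)

lemma v_le_sum_sing {T : Type*} {m : ℕ}
    (v : T → Finset (Fin m) → ℝ)
    (hsub : ∀ t (U W : Finset (Fin m)), v t (U ∪ W) ≤ v t U + v t W)
    (t : T) (S : Finset (Fin m)) (hS : S.Nonempty) :
    v t S ≤ ∑ j ∈ S, v t {j} := by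
  induction hS using Finset.Nonempty.cons_induction with
  | singleton a => simp
  | cons a s ha hs ih =>
    rw [Finset.cons_eq_insert, Finset.insert_eq,
      Finset.sum_union (Finset.disjoint_singleton_left.mpr ha), Finset.sum_singleton]
    exact le_trans (hsub t {a} s) (by linarith)

lemma one_side {T C : Type*} {m : ℕ} [DecidableEq C]
    (coord : T → Fin m → C)
    (v : T → Finset (Fin m) → ℝ) (Vv : C → ℝ)
    (hmono : ∀ t (U W : Finset (Fin m)), U ⊆ W → v t U ≤ v t W)
    (hsub : ∀ t (U W : Finset (Fin m)), v t (U ∪ W) ≤ v t U + v t W)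
    (hext : ∀ t t' (S : Finset (Fin m)),
      (∀ j ∈ S, coord t j = coord t' j) → v t S = v t' S)
    (hsing : ∀ t j, v t {j} = Vv (coord t j))
    (Q : Fin m → ℝ) (τ : ℝ) (hQ : ∀ j, 0 ≤ Q j) (hτ : 0 ≤ τ)
    (vhat : T → Finset (Fin m) → ℝ)
    (hvhat : ∀ t S, vhat t S =
      v t (S ∩ Finset.univ.filter (fun j => Vv (coord t j) < Q j + τ)))
    (t t' : T) (X Y : Finset (Fin m)) :
    surplusFn vhat Q t X - surplusFn vhat Q t' Y ≤
      τ * ((((X \ Y) ∪ (Y \ X)).card : ℝ) + ((X ∩ Y).card : ℝ) -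
        (((X ∩ Y).filter (fun j => coord t j = coord t' j)).card : ℝ)) := by
  classical
  set H : Finset (Fin m) := (X ∩ Y).filter (fun j => coord t j = coord t' j) with hH
  set Yt : Finset (Fin m) := Finset.univ.filter (fun j => Vv (coord t j) < Q j + τ) with hYt
  set Yt' : Finset (Fin m) := Finset.univ.filter (fun j => Vv (coord t' j) < Q j + τ) with hYt'
  obtain ⟨Xs, hXsmem, hXs⟩ := Finset.exists_mem_eq_sup' (⟨∅, Finset.empty_mem_powerset X⟩ :
    X.powerset.Nonempty) (fun S' => vhat t S' - ∑ j ∈ S', Q j)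
  have hXsX : Xs ⊆ X := Finset.mem_powerset.mp hXsmem
  set A : Finset (Fin m) := Xs ∩ Yt with hA
  -- coords agree on H
  have hHco : ∀ j ∈ H, coord t j = coord t' j := fun j hj => (Finset.mem_filter.mp hj).2
  have hHXY : H ⊆ X ∩ Y := Finset.filter_subset _ _
  -- the competing bundle for (t',Y)
  have hsubY : Xs ∩ H ⊆ Y := fun j hj =>
    (Finset.mem_inter.mp (hHXY (Finset.mem_inter.mp hj).2)).2
  have hlow : vhat t' (Xs ∩ H) - ∑ j ∈ Xs ∩ H, Q j ≤ surplusFn vhat Q t' Y := by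
    rw [surplusFn]
    exact Finset.le_sup' (fun S' => vhat t' S' - ∑ j ∈ S', Q j)
      (Finset.mem_powerset.mpr hsubY)
  -- vhat t' (Xs∩H) = v t ((Xs∩H)∩Yt)
  have hfilt : (Xs ∩ H) ∩ Yt' = (Xs ∩ H) ∩ Yt := by
    ext j
    simp only [Finset.mem_inter, Finset.mem_filter, Finset.mem_univ, true_and, hYt, hYt']
    constructor
    · rintro ⟨⟨h1, h2⟩, h3⟩
      exact ⟨⟨h1, h2⟩, by rw [(Finset.mem_filter.mp h2).2]; exact h3⟩
    · rintro ⟨⟨h1, h2⟩, h3⟩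
      exact ⟨⟨h1, h2⟩, by rw [← (Finset.mem_filter.mp h2).2]; exact h3⟩
  have hvv : vhat t' (Xs ∩ H) = v t ((Xs ∩ H) ∩ Yt) := by
    rw [hvhat, ← hYt', hfilt]
    exact (hext t t' _ (fun j hj => hHco j (Finset.mem_inter.mp (Finset.mem_inter.mp hj).1).2)).symm
  have hAH : A ∩ H = (Xs ∩ H) ∩ Yt := by
    ext j; simp only [hA, Finset.mem_inter]; tauto
  -- subadditive bound
  have hkey : v t A ≤ v t (A ∩ H) + ∑ j ∈ A \ H, (Q j + τ) := by
    rcases (A \ H).eq_empty_or_nonempty with he | hne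
    · have : A ∩ H = A := by
        rw [Finset.sdiff_eq_empty_iff_subset] at he
        exact Finset.inter_eq_left.mpr he
      rw [this, he, Finset.sum_empty]; linarith
    · have h1 : v t A ≤ v t (A ∩ H) + v t (A \ H) := by
        have : A = (A ∩ H) ∪ (A \ H) := by
          ext j; simp only [Finset.mem_union, Finset.mem_inter, Finset.mem_sdiff]; tauto
        calc v t A = v t ((A ∩ H) ∪ (A \ H)) := by rw [← this]
          _ ≤ _ := hsub t _ _
      have h2 : v t (A \ H) ≤ ∑ j ∈ A \ H, (Q j + τ) := by
        calc v t (A \ H) ≤ ∑ j ∈ A \ H, v t {j} := v_le_sum_sing v hsub t _ hne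
          _ ≤ ∑ j ∈ A \ H, (Q j + τ) := by
            apply Finset.sum_le_sum
            intro j hj
            rw [hsing]
            have hjA : j ∈ A := (Finset.mem_sdiff.mp hj).1
            have : j ∈ Yt := (Finset.mem_inter.mp hjA).2
            have := (Finset.mem_filter.mp this).2
            linarith
      linarith
  -- sums
  have hsum : ∑ j ∈ Xs ∩ H, Q j + ∑ j ∈ Xs \ H, Q j = ∑ j ∈ Xs, Q j :=
    Finset.sum_inter_add_sum_sdiff Xs H Q
  have hQle : ∑ j ∈ A \ H, Q j ≤ ∑ j ∈ Xs \ H, Q j := by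
    apply Finset.sum_le_sum_of_subset_of_nonneg
    · exact Finset.sdiff_subset_sdiff (Finset.inter_subset_left) (le_refl _)
    · intro j _ _; exact hQ j
  -- card bound
  have hcard1 : (A \ H).card ≤ (X \ H).card :=
    Finset.card_le_card (Finset.sdiff_subset_sdiff
      (le_trans Finset.inter_subset_left hXsX) (le_refl _))
  have hXH : X \ H ⊆ (X \ Y) ∪ ((X ∩ Y) \ H) := by
    intro j hj
    rw [Finset.mem_sdiff] at hj
    simp only [Finset.mem_union, Finset.mem_sdiff, Finset.mem_inter]
    by_cases hjY : j ∈ Y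
    · exact Or.inr ⟨⟨hj.1, hjY⟩, hj.2⟩
    · exact Or.inl ⟨hj.1, hjY⟩
  have hcard2 : ((X ∩ Y) \ H).card = (X ∩ Y).card - H.card := Finset.card_sdiff_of_subset hHXY
  have hcard : ((A \ H).card : ℝ) ≤ (((X \ Y) ∪ (Y \ X)).card : ℝ) + ((X ∩ Y).card : ℝ)
      - (H.card : ℝ) := by
    have h3 : (X \ H).card ≤ (X \ Y).card + ((X ∩ Y) \ H).card :=
      le_trans (Finset.card_le_card hXH) (Finset.card_union_le _ _)
    have h4 : (X \ Y).card ≤ ((X \ Y) ∪ (Y \ X)).card :=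
      Finset.card_le_card Finset.subset_union_left
    have h5 : H.card ≤ (X ∩ Y).card := Finset.card_le_card hHXY
    have hc2r : ((((X ∩ Y) \ H).card : ℝ)) = ((X ∩ Y).card : ℝ) - (H.card : ℝ) := by
      rw [hcard2, Nat.cast_sub h5]
    have h3r : ((X \ H).card : ℝ) ≤ ((X \ Y).card : ℝ) + (((X ∩ Y) \ H).card : ℝ) := by
      exact_mod_cast h3
    have h1r : ((A \ H).card : ℝ) ≤ ((X \ H).card : ℝ) := by exact_mod_cast hcard1
    have h4r : ((X \ Y).card : ℝ) ≤ (((X \ Y) ∪ (Y \ X)).card : ℝ) := by exact_mod_cast h4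
    linarith
  -- assemble
  have hμX : surplusFn vhat Q t X = v t A - ∑ j ∈ Xs, Q j := by
    rw [surplusFn, hXs, hvhat, ← hYt, ← hA]
  have hμY : v t (A ∩ H) - ∑ j ∈ Xs ∩ H, Q j ≤ surplusFn vhat Q t' Y := by
    rw [← hAH] at hvv
    rw [← hvv]; exact hlow
  have hsplit : ∑ j ∈ A \ H, (Q j + τ) = ∑ j ∈ A \ H, Q j + τ * ((A \ H).card : ℝ) := by
    rw [Finset.sum_add_distrib, Finset.sum_const, nsmul_eq_mul]; ring
  have : surplusFn vhat Q t X - surplusFn vhat Q t' Y ≤ τ * ((A \ H).card : ℝ) := by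
    rw [hμX]
    nlinarith [hμY, hkey, hsum, hQle, hsplit]
  calc surplusFn vhat Q t X - surplusFn vhat Q t' Y ≤ τ * ((A \ H).card : ℝ) := this
    _ ≤ _ := by nlinarith [hcard, hτ]

/-- `μ` is `τ`-Lipschitz: `|μ(t,X) − μ(t',Y)| ≤ τ·(|X Δ Y| + |X ∩ Y| − |H|)` where
`H = {j ∈ X ∩ Y : t_j = t'_j}`. -/
theorem surplus_tau_lipschitz {T C : Type*} {m : ℕ} [DecidableEq C]
    (coord : T → Fin m → C)
    (v : T → Finset (Fin m) → ℝ) (Vv : C → ℝ)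
    (hv0 : ∀ t S, 0 ≤ v t S)
    (hmono : ∀ t (U W : Finset (Fin m)), U ⊆ W → v t U ≤ v t W)
    (hsub : ∀ t (U W : Finset (Fin m)), v t (U ∪ W) ≤ v t U + v t W)
    (hext : ∀ t t' (S : Finset (Fin m)),
      (∀ j ∈ S, coord t j = coord t' j) → v t S = v t' S)
    (hsing : ∀ t j, v t {j} = Vv (coord t j))
    (Q : Fin m → ℝ) (τ : ℝ) (hQ : ∀ j, 0 ≤ Q j) (hτ : 0 ≤ τ)
    -- `v̂(t,S) = v(t, S ∩ Y(t))` with `Y(t) = {j : V(t_j) < Q_j + τ}`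
    (vhat : T → Finset (Fin m) → ℝ)
    (hvhat : ∀ t S, vhat t S =
      v t (S ∩ Finset.univ.filter (fun j => Vv (coord t j) < Q j + τ)))
    (t t' : T) (X Y : Finset (Fin m)) :
    |surplusFn vhat Q t X - surplusFn vhat Q t' Y| ≤
      τ * ((((X \ Y) ∪ (Y \ X)).card : ℝ) + ((X ∩ Y).card : ℝ) -
        (((X ∩ Y).filter (fun j => coord t j = coord t' j)).card : ℝ)) := by
  rw [abs_sub_le_iff]
  constructor
  · exact one_side coord v Vv hmono hsub hext hsing Q τ hQ hτ vhat hvhat t t' X Y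
  · have h := one_side coord v Vv hmono hsub hext hsing Q τ hQ hτ vhat hvhat t' t Y X
    have e1 : (Y \ X) ∪ (X \ Y) = (X \ Y) ∪ (Y \ X) := Finset.union_comm _ _
    have e2 : Y ∩ X = X ∩ Y := Finset.inter_comm _ _
    have e3 : (X ∩ Y).filter (fun j => coord t' j = coord t j)
        = (X ∩ Y).filter (fun j => coord t j = coord t' j) :=
      Finset.filter_congr (fun j _ => by simp [eq_comm])
    rw [e1, e2, e3] at h
    exact h
end

section
/- (Tail bound from truncation.) Let b_j, r_j ≥ 0 for j ∈ [m], c ≥ 0, and for each j let W_j be a nonnegative random variable (the value V(t_j)), with all W_j independent. Assume: (a) Σ_j Pr[W_j − b_j ≥ c] ≤ 1/2; (b) for every j,k with j ≠ k and every threshold x ≥ c: (b_k + x)·Pr[W_k − b_k ≥ x] ≤ r_k. Then Σ_j E[ 1[W_j ≥ b_j + c] · (W_j − b_j) · Σ_{k≠j} Pr[W_k − b_k ≥ W_j − b_j] ] ≤ Σ_j Pr[W_j ≥ b_j + c] · Σ_{k≠j} r_k. -/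
open MeasureTheory

/-- Tail bound from truncation: the expected excess-value tail contribution is bounded by
`Σ_j Pr[W_j ≥ b_j + c] · Σ_{k≠j} r_k`. -/
theorem tail_bound_from_truncation {Ω : Type*} [MeasurableSpace Ω]
    (μ : Measure Ω) [IsProbabilityMeasure μ]
    {m : ℕ} (W : Fin m → Ω → ℝ)
    (hWmeas : ∀ j, Measurable (W j))
    (hW0 : ∀ j ω, 0 ≤ W j ω)
    (hindep : ProbabilityTheory.iIndepFun W μ)
    (b r : Fin m → ℝ) (hb : ∀ j, 0 ≤ b j) (hr : ∀ j, 0 ≤ r j)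
    (c : ℝ) (hc : 0 ≤ c)
    (ha : ∑ j, (μ {ω | c ≤ W j ω - b j}).toReal ≤ 1/2)
    (hbb : ∀ j k, j ≠ k → ∀ x : ℝ, c ≤ x →
      (b k + x) * (μ {ω | x ≤ W k ω - b k}).toReal ≤ r k) :
    ∑ j, (∫ ω, (if b j + c ≤ W j ω then
        (W j ω - b j) *
          ∑ k ∈ Finset.univ.erase j, (μ {ω' | W j ω - b j ≤ W k ω' - b k}).toReal
      else 0) ∂μ) ≤
      ∑ j, (μ {ω | b j + c ≤ W j ω}).toReal * ∑ k ∈ Finset.univ.erase j, r k := by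
  refine Finset.sum_le_sum fun j _ => ?_
  set S : Set Ω := {ω | b j + c ≤ W j ω} with hS
  have hSm : MeasurableSet S := measurableSet_le measurable_const (hWmeas j)
  have hRnn : (0:ℝ) ≤ ∑ k ∈ Finset.univ.erase j, r k :=
    Finset.sum_nonneg fun k _ => hr k
  have hg : Integrable (S.indicator fun _ => ∑ k ∈ Finset.univ.erase j, r k) μ :=
    (integrable_const _).indicator hSm
  have hle : ∀ ω, (if b j + c ≤ W j ω then
        (W j ω - b j) *
          ∑ k ∈ Finset.univ.erase j, (μ {ω' | W j ω - b j ≤ W k ω' - b k}).toReal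
      else 0) ≤ S.indicator (fun _ => ∑ k ∈ Finset.univ.erase j, r k) ω := by
    intro ω
    by_cases h : b j + c ≤ W j ω
    · rw [if_pos h, Set.indicator_of_mem (show ω ∈ S from h)]
      have hx : c ≤ W j ω - b j := by linarith
      rw [Finset.mul_sum]
      refine Finset.sum_le_sum fun k hk => ?_
      have hjk : j ≠ k := (Finset.ne_of_mem_erase hk).symm
      calc (W j ω - b j) * (μ {ω' | W j ω - b j ≤ W k ω' - b k}).toReal
          ≤ (b k + (W j ω - b j)) * (μ {ω' | W j ω - b j ≤ W k ω' - b k}).toReal := by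
            apply mul_le_mul_of_nonneg_right _ ENNReal.toReal_nonneg
            linarith [hb k]
        _ ≤ r k := hbb j k hjk _ hx
    · rw [if_neg h, Set.indicator_of_notMem (show ω ∉ S from h)]
  have hnn : ∀ ω, (0:ℝ) ≤ (if b j + c ≤ W j ω then
        (W j ω - b j) *
          ∑ k ∈ Finset.univ.erase j, (μ {ω' | W j ω - b j ≤ W k ω' - b k}).toReal
      else 0) := by
    intro ω
    by_cases h : b j + c ≤ W j ω
    · rw [if_pos h]
      exact mul_nonneg (by linarith) (Finset.sum_nonneg fun k _ => ENNReal.toReal_nonneg)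
    · rw [if_neg h]
  calc (∫ ω, (if b j + c ≤ W j ω then
        (W j ω - b j) *
          ∑ k ∈ Finset.univ.erase j, (μ {ω' | W j ω - b j ≤ W k ω' - b k}).toReal
      else 0) ∂μ)
      ≤ ∫ ω, S.indicator (fun _ => ∑ k ∈ Finset.univ.erase j, r k) ω ∂μ :=
        integral_mono_of_nonneg (Filter.Eventually.of_forall hnn) hg
          (Filter.Eventually.of_forall hle)
    _ = (μ S).toReal * ∑ k ∈ Finset.univ.erase j, r k := by
        rw [integral_indicator_const _ hSm]; simp [mul_comm, Measure.real]
end
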